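/- Let V be a finite-dimensional real vector space and let I, J, K be linear endomorphisms of V satisfying I ∘ I = J ∘ J = K ∘ K = −id, I ∘ J = K, J ∘ K = I and K ∘ I = J. Let D be a linear subspace of V whose real codimension in V is 2, i.e. dim V = dim D + 2. Then the set {(a, b, c) ∈ ℝ³ : a² + b² + c² = 1 and (a•I + b•J + c•K)(D) ⊆ D} contains at most two elements. -/

import Mathlib

open LinearMap Quaternion

private lemma quat4_aux {V : Type*} [AddCommGroup V] [Module ℝ V] [FiniteDimensional ℝ V]
    (A B C : V →ₗ[ℝ] V)
    (hA : A ∘ₗ A = -LinearMap.id) (hB : B ∘ₗ B = -LinearMap.id)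
    (hAB : A ∘ₗ B = C) (hBC : B ∘ₗ C = A) (hCA : C ∘ₗ A = B) :
    4 ∣ Module.finrank ℝ V := by
  have hA' : ∀ v, A (A v) = -v := fun v => by
    have := LinearMap.ext_iff.mp hA v; simpa using this
  have hB' : ∀ v, B (B v) = -v := fun v => by
    have := LinearMap.ext_iff.mp hB v; simpa using this
  have hAB' : ∀ v, A (B v) = C v := fun v => LinearMap.ext_iff.mp hAB v
  have hBC' : ∀ v, B (C v) = A v := fun v => LinearMap.ext_iff.mp hBC v
  have hCA' : ∀ v, C (A v) = B v := fun v => LinearMap.ext_iff.mp hCA v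
  have hC' : ∀ v, C (C v) = -v := fun v => by
    rw [← hAB' (C v), hBC', hA']
  have hBA' : ∀ v, B (A v) = -C v := fun v => by
    rw [← hBC' v, hB']
  have hCB' : ∀ v, C (B v) = -A v := fun v => by
    rw [← hCA' v, hC']
  have hAC' : ∀ v, A (C v) = -B v := fun v => by
    rw [← hAB' v, hA']
  letI : SMul ℍ[ℝ] V :=
    ⟨fun q v => q.re • v + q.imI • A v + q.imJ • B v + q.imK • C v⟩
  have smul_def : ∀ (q : ℍ[ℝ]) (v : V),
      q • v = q.re • v + q.imI • A v + q.imJ • B v + q.imK • C v := fun _ _ => rfl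
  letI : MulAction ℍ[ℝ] V :=
    { one_smul := fun v => by simp [smul_def]
      mul_smul := fun q r v => by
        rw [smul_def, smul_def, smul_def, Quaternion.re_mul, Quaternion.imI_mul,
          Quaternion.imJ_mul, Quaternion.imK_mul]
        simp only [map_add, map_smul, hA', hB', hC', hAB', hBA', hBC', hCB', hCA', hAC',
          smul_neg]
        module }
  letI : DistribMulAction ℍ[ℝ] V :=
    { smul_zero := fun q => by simp [smul_def]
      smul_add := fun q v w => by simp only [smul_def, map_add, smul_add]; module }
  letI : Module ℍ[ℝ] V :=
    { add_smul := fun q r v => by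
        simp only [smul_def, Quaternion.re_add, Quaternion.imI_add, Quaternion.imJ_add,
          Quaternion.imK_add]
        module
      zero_smul := fun v => by simp [smul_def] }
  letI : IsScalarTower ℝ ℍ[ℝ] V :=
    ⟨fun r q v => by
      simp only [smul_def, Quaternion.re_smul, Quaternion.imI_smul, Quaternion.imJ_smul,
        Quaternion.imK_smul, smul_eq_mul]
      module⟩
  have : Module.finrank ℝ ℍ[ℝ] * Module.finrank ℍ[ℝ] V = Module.finrank ℝ V :=
    Module.finrank_mul_finrank ℝ ℍ[ℝ] V
  rw [Quaternion.finrank_eq_four] at this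
  exact ⟨_, this.symm⟩

private lemma comp_formula_aux {V : Type*} [AddCommGroup V] [Module ℝ V]
    (I J K : V →ₗ[ℝ] V)
    (hI : I ∘ₗ I = -LinearMap.id) (hJ : J ∘ₗ J = -LinearMap.id) (hK : K ∘ₗ K = -LinearMap.id)
    (hIJ : I ∘ₗ J = K) (hJK : J ∘ₗ K = I) (hKI : K ∘ₗ I = J)
    (a b c d e f : ℝ) (x : V) :
    (a • I + b • J + c • K) ((d • I + e • J + f • K) x) =
      (-(a * d + b * e + c * f)) • x
      + (b * f - c * e) • I x
      + (c * d - a * f) • J x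
      + (a * e - b * d) • K x := by
  have hII : ∀ v, I (I v) = -v := fun v => by
    have := LinearMap.ext_iff.mp hI v; simpa using this
  have hJJ : ∀ v, J (J v) = -v := fun v => by
    have := LinearMap.ext_iff.mp hJ v; simpa using this
  have hKK : ∀ v, K (K v) = -v := fun v => by
    have := LinearMap.ext_iff.mp hK v; simpa using this
  have hIJ' : ∀ v, I (J v) = K v := fun v => LinearMap.ext_iff.mp hIJ v
  have hJK' : ∀ v, J (K v) = I v := fun v => LinearMap.ext_iff.mp hJK v
  have hKI' : ∀ v, K (I v) = J v := fun v => LinearMap.ext_iff.mp hKI v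
  have hJI : ∀ v, J (I v) = -K v := fun v => by rw [← hJK' v, hJJ]
  have hKJ : ∀ v, K (J v) = -I v := fun v => by rw [← hKI' v, hKK]
  have hIK : ∀ v, I (K v) = -J v := fun v => by rw [← hIJ' v, hII]
  simp only [LinearMap.add_apply, LinearMap.smul_apply, map_add, map_smul,
    hII, hJJ, hKK, hIJ', hJK', hKI', hJI, hKJ, hIK, smul_neg]
  module

private lemma triple_quat_aux {V : Type*} [AddCommGroup V] [Module ℝ V]
    (I J K : V →ₗ[ℝ] V)
    (hI : I ∘ₗ I = -LinearMap.id) (hJ : J ∘ₗ J = -LinearMap.id) (hK : K ∘ₗ K = -LinearMap.id)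
    (hIJ : I ∘ₗ J = K) (hJK : J ∘ₗ K = I) (hKI : K ∘ₗ I = J)
    (a b c d e f : ℝ)
    (huu : a ^ 2 + b ^ 2 + c ^ 2 = 1) (hvv : d ^ 2 + e ^ 2 + f ^ 2 = 1)
    (huv : a * d + b * e + c * f = 0) :
    (a • I + b • J + c • K) ∘ₗ (a • I + b • J + c • K) = -LinearMap.id ∧
    (d • I + e • J + f • K) ∘ₗ (d • I + e • J + f • K) = -LinearMap.id ∧
    (a • I + b • J + c • K) ∘ₗ (d • I + e • J + f • K)
      = (b * f - c * e) • I + (c * d - a * f) • J + (a * e - b * d) • K ∧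
    (d • I + e • J + f • K) ∘ₗ
      ((b * f - c * e) • I + (c * d - a * f) • J + (a * e - b * d) • K)
      = a • I + b • J + c • K ∧
    ((b * f - c * e) • I + (c * d - a * f) • J + (a * e - b * d) • K) ∘ₗ
      (a • I + b • J + c • K) = d • I + e • J + f • K := by
  refine ⟨?_, ?_, ?_, ?_, ?_⟩ <;>
    · ext x
      simp only [LinearMap.comp_apply]
      rw [comp_formula_aux I J K hI hJ hK hIJ hJK hKI]
      simp only [LinearMap.neg_apply, LinearMap.id_apply, LinearMap.add_apply,
        LinearMap.smul_apply]
      match_scalars <;>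
        first
          | ring1
          | linear_combination -1 * huu
          | linear_combination -1 * hvv
          | linear_combination -1 * huv
          | linear_combination a * hvv - d * huv
          | linear_combination b * hvv - e * huv
          | linear_combination c * hvv - f * huv
          | linear_combination d * huu - a * huv
          | linear_combination e * huu - b * huv
          | linear_combination f * huu - c * huv

set_option maxHeartbeats 1000000 in
private lemma main_pair_aux {V : Type*} [AddCommGroup V] [Module ℝ V] [FiniteDimensional ℝ V]
    (I J K : V →ₗ[ℝ] V)
    (hI : I ∘ₗ I = -LinearMap.id) (hJ : J ∘ₗ J = -LinearMap.id) (hK : K ∘ₗ K = -LinearMap.id)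
    (hIJ : I ∘ₗ J = K) (hJK : J ∘ₗ K = I) (hKI : K ∘ₗ I = J)
    (D : Submodule ℝ V) (hD : Module.finrank ℝ V = Module.finrank ℝ D + 2)
    (a b c d e f : ℝ)
    (hu : a ^ 2 + b ^ 2 + c ^ 2 = 1) (hv : d ^ 2 + e ^ 2 + f ^ 2 = 1)
    (hud : ∀ x ∈ D, (a • I + b • J + c • K) x ∈ D)
    (hvd : ∀ x ∈ D, (d • I + e • J + f • K) x ∈ D)
    (hne1 : ¬(d = a ∧ e = b ∧ f = c)) (hne2 : ¬(d = -a ∧ e = -b ∧ f = -c)) : False := by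
  have h1t : (a*d+b*e+c*f)^2 ≤ 1 := by
    nlinarith [sq_nonneg (b*f-c*e), sq_nonneg (c*d-a*f), sq_nonneg (a*e-b*d)]
  have h2t : (a*d+b*e+c*f)^2 ≠ 1 := by
    intro hT
    have hz : (b*f-c*e)^2 + (c*d-a*f)^2 + (a*e-b*d)^2 = 0 := by
      linear_combination (d^2+e^2+f^2)*hu + hv - hT
    have hz1 : b*f-c*e = 0 := by
      nlinarith [sq_nonneg (b*f-c*e), sq_nonneg (c*d-a*f), sq_nonneg (a*e-b*d)]
    have hz2 : c*d-a*f = 0 := by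
      nlinarith [sq_nonneg (b*f-c*e), sq_nonneg (c*d-a*f), sq_nonneg (a*e-b*d)]
    have hz3 : a*e-b*d = 0 := by
      nlinarith [sq_nonneg (b*f-c*e), sq_nonneg (c*d-a*f), sq_nonneg (a*e-b*d)]
    have hda : d = (a*d+b*e+c*f)*a := by linear_combination (-1*d)*hu + c*hz2 - b*hz3
    have heb : e = (a*d+b*e+c*f)*b := by linear_combination (-1*e)*hu + a*hz3 - c*hz1
    have hfc : f = (a*d+b*e+c*f)*c := by linear_combination (-1*f)*hu + b*hz1 - a*hz2
    have hT1 : ((a*d+b*e+c*f) - 1) * ((a*d+b*e+c*f) + 1) = 0 := by linear_combination hT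
    rcases mul_eq_zero.mp hT1 with h | h
    · exact hne1 ⟨by linear_combination hda + a*h, by linear_combination heb + b*h,
        by linear_combination hfc + c*h⟩
    · exact hne2 ⟨by linear_combination hda + a*h, by linear_combination heb + b*h,
        by linear_combination hfc + c*h⟩
  have ht2 : (a*d+b*e+c*f)^2 < 1 := lt_of_le_of_ne h1t h2t
  set s : ℝ := Real.sqrt (1 - (a*d+b*e+c*f)^2) with hsdef
  have hspos : 0 < s := Real.sqrt_pos.mpr (by nlinarith)
  have hs0 : s ≠ 0 := ne_of_gt hspos
  have hs2 : s^2 = 1 - (a*d+b*e+c*f)^2 := Real.sq_sqrt (by nlinarith)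
  have hnn : ((b*f-c*e)/s)^2 + ((c*d-a*f)/s)^2 + ((a*e-b*d)/s)^2 = 1 := by
    field_simp
    linear_combination (d^2+e^2+f^2)*hu + hv - hs2
  have hun : a*((b*f-c*e)/s) + b*((c*d-a*f)/s) + c*((a*e-b*d)/s) = 0 := by
    field_simp
    ring
  obtain ⟨RA, RB, RAB, RBC, RCA⟩ := triple_quat_aux I J K hI hJ hK hIJ hJK hKI
    a b c ((b*f-c*e)/s) ((c*d-a*f)/s) ((a*e-b*d)/s) hu hnn hun
  have hBmem : ∀ x ∈ D,
      (((b*f-c*e)/s) • I + ((c*d-a*f)/s) • J + ((a*e-b*d)/s) • K) x ∈ D := by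
    intro x hx
    have key : (((b*f-c*e)/s) • I + ((c*d-a*f)/s) • J + ((a*e-b*d)/s) • K) x
        = s⁻¹ • ((a•I+b•J+c•K) ((d•I+e•J+f•K) x) + (a*d+b*e+c*f) • x) := by
      rw [comp_formula_aux I J K hI hJ hK hIJ hJK hKI]
      simp only [LinearMap.add_apply, LinearMap.smul_apply, smul_add]
      module
    rw [key]
    exact Submodule.smul_mem _ _
      (Submodule.add_mem _ (hud _ (hvd x hx)) (Submodule.smul_mem _ _ hx))
  have hCmem : ∀ x ∈ D,
      ((b*((a*e-b*d)/s) - c*((c*d-a*f)/s)) • I + (c*((b*f-c*e)/s) - a*((a*e-b*d)/s)) • J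
        + (a*((c*d-a*f)/s) - b*((b*f-c*e)/s)) • K) x ∈ D := by
    intro x hx
    have h := LinearMap.ext_iff.mp RAB x
    rw [LinearMap.comp_apply] at h
    rw [← h]
    exact hud _ (hBmem x hx)
  set A : V →ₗ[ℝ] V := a • I + b • J + c • K with hAdef
  set B : V →ₗ[ℝ] V := ((b*f-c*e)/s) • I + ((c*d-a*f)/s) • J + ((a*e-b*d)/s) • K with hBdef
  set C : V →ₗ[ℝ] V := (b*((a*e-b*d)/s) - c*((c*d-a*f)/s)) • I
      + (c*((b*f-c*e)/s) - a*((a*e-b*d)/s)) • J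
      + (a*((c*d-a*f)/s) - b*((b*f-c*e)/s)) • K with hCdef
  have hres1 : ∀ (F : V →ₗ[ℝ] V) (hF : ∀ x ∈ D, F x ∈ D),
      F ∘ₗ F = -LinearMap.id → F.restrict hF ∘ₗ F.restrict hF = -LinearMap.id := by
    intro F hF h
    ext x
    have h2 := LinearMap.ext_iff.mp h (x : V)
    simp only [LinearMap.comp_apply, LinearMap.neg_apply, LinearMap.id_apply] at h2 ⊢
    simp only [LinearMap.restrict_coe_apply, NegMemClass.coe_neg]
    exact h2
  have hres2 : ∀ (F G H : V →ₗ[ℝ] V) (hF : ∀ x ∈ D, F x ∈ D) (hG : ∀ x ∈ D, G x ∈ D)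
      (hH : ∀ x ∈ D, H x ∈ D),
      F ∘ₗ G = H → F.restrict hF ∘ₗ G.restrict hG = H.restrict hH := by
    intro F G H hF hG hH h
    ext x
    have h2 := LinearMap.ext_iff.mp h (x : V)
    simp only [LinearMap.comp_apply] at h2 ⊢
    simp only [LinearMap.restrict_coe_apply]
    exact h2
  have h4D : 4 ∣ Module.finrank ℝ D :=
    quat4_aux (A.restrict hud) (B.restrict hBmem) (C.restrict hCmem)
      (hres1 A hud RA) (hres1 B hBmem RB)
      (hres2 A B C hud hBmem hCmem RAB)
      (hres2 B C A hBmem hCmem hud RBC)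
      (hres2 C A B hCmem hud hBmem RCA)
  have h4V : 4 ∣ Module.finrank ℝ V := quat4_aux I J K hI hJ hIJ hJK hKI
  obtain ⟨k, hk⟩ := h4V
  obtain ⟨l, hl⟩ := h4D
  omega

/-- The claim of Section 7: if `(I, J, K)` is a quaternionic structure on a
finite-dimensional real vector space `V` and `D` is a subspace of real codimension 2,
then at most two of the complex structures `a•I + b•J + c•K` (with `a² + b² + c² = 1`)
preserve `D`. -/
theorem stmt_12 {V : Type*} [AddCommGroup V] [Module ℝ V] [FiniteDimensional ℝ V]
    (I J K : V →ₗ[ℝ] V)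
    (hI : I ∘ₗ I = -LinearMap.id) (hJ : J ∘ₗ J = -LinearMap.id) (hK : K ∘ₗ K = -LinearMap.id)
    (hIJ : I ∘ₗ J = K) (hJK : J ∘ₗ K = I) (hKI : K ∘ₗ I = J)
    (D : Submodule ℝ V) (hD : Module.finrank ℝ V = Module.finrank ℝ D + 2) :
    {p : ℝ × ℝ × ℝ | p.1 ^ 2 + p.2.1 ^ 2 + p.2.2 ^ 2 = 1 ∧
      ∀ x ∈ D, (p.1 • I + p.2.1 • J + p.2.2 • K) x ∈ D}.encard ≤ 2 := by
  set S : Set (ℝ × ℝ × ℝ) := {p : ℝ × ℝ × ℝ | p.1 ^ 2 + p.2.1 ^ 2 + p.2.2 ^ 2 = 1 ∧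
      ∀ x ∈ D, (p.1 • I + p.2.1 • J + p.2.2 • K) x ∈ D} with hSdef
  by_contra hcon
  push_neg at hcon
  have h1 : (1 : ℕ∞) < S.encard := lt_trans (by norm_num : (1:ℕ∞) < 2) hcon
  obtain ⟨p, hp⟩ : S.Nonempty := by
    rw [← Set.encard_pos]
    exact lt_trans (by norm_num) hcon
  obtain ⟨q, hq, hqp⟩ := Set.exists_ne_of_one_lt_encard h1 p
  obtain ⟨r, hr, hrq, hrp⟩ : ∃ r ∈ S, r ≠ q ∧ r ≠ p := by
    by_contra hcon2
    push_neg at hcon2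
    have hsub : S ⊆ {q, p} := by
      intro z hz
      rcases eq_or_ne z q with h | h
      · exact Or.inl h
      · exact Or.inr (hcon2 z hz h)
    have hle : S.encard ≤ 2 := by
      refine le_trans (Set.encard_mono hsub) ?_
      refine le_trans (Set.encard_insert_le _ _) ?_
      rw [Set.encard_singleton]
      norm_num
    exact absurd hle (not_le.mpr hcon)
  have hp1 : p.1 ^ 2 + p.2.1 ^ 2 + p.2.2 ^ 2 = 1 := hp.1
  have hp2 : ∀ x ∈ D, (p.1 • I + p.2.1 • J + p.2.2 • K) x ∈ D := hp.2
  by_cases hqnp : q = -p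
  · -- use p and r
    refine main_pair_aux I J K hI hJ hK hIJ hJK hKI D hD
      p.1 p.2.1 p.2.2 r.1 r.2.1 r.2.2 hp1 hr.1 hp2 hr.2 ?_ ?_
    · rintro ⟨h1, h2, h3⟩
      exact hrp (Prod.ext_iff.mpr ⟨h1, Prod.ext_iff.mpr ⟨h2, h3⟩⟩)
    · rintro ⟨h1, h2, h3⟩
      apply hrq
      rw [hqnp]
      refine Prod.ext_iff.mpr ⟨?_, Prod.ext_iff.mpr ⟨?_, ?_⟩⟩ <;> simpa
  · refine main_pair_aux I J K hI hJ hK hIJ hJK hKI D hD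
      p.1 p.2.1 p.2.2 q.1 q.2.1 q.2.2 hp1 hq.1 hp2 hq.2 ?_ ?_
    · rintro ⟨h1, h2, h3⟩
      exact hqp (Prod.ext_iff.mpr ⟨h1, Prod.ext_iff.mpr ⟨h2, h3⟩⟩)
    · rintro ⟨h1, h2, h3⟩
      apply hqnp
      refine Prod.ext_iff.mpr ⟨?_, Prod.ext_iff.mpr ⟨?_, ?_⟩⟩ <;> simpa
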